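/- Let p, q be positive integers, n = p + q, and let v be an ascending shuffle in S_n. Let F_1 ⊂ F_2 ⊂ ⋯ ⊂ F_n = ℂ^n be a complete flag. If dim(F_i ∩ Ẽ_q) = #{k ≤ i : v(k) > p} for all i ∈ {1,…,n}, then dim(F_i ∩ Ẽ_j) ≥ #{k ≤ i : v(k) > n − j} for all i, j ∈ {1,…,n}. (That is, any flag satisfying the q-th column rank conditions lies in the opposite Schubert variety X^v.) -/

import Mathlib

/-- `v` is an ascending shuffle of `1,…,p` and `p+1,…,n`. -/
def AscShuffle (p : ℕ) {n : ℕ} (v : Equiv.Perm (Fin n)) : Prop :=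
  ∀ i j : Fin n, i < j →
    ((v i : ℕ) + 1 ≤ p ∧ (v j : ℕ) + 1 ≤ p → v i < v j) ∧
    (p < (v i : ℕ) + 1 ∧ p < (v j : ℕ) + 1 → v i < v j)

/-- `Ẽ j`: the span of the last `j` standard basis vectors `e_{n-j+1},…,e_n` of `ℂ^n`. -/
noncomputable def stdEtilde (n j : ℕ) : Submodule ℂ (Fin n → ℂ) :=
  Submodule.span ℂ ((fun k : Fin n => (Pi.single k 1 : Fin n → ℂ)) ''
    {k : Fin n | n - j ≤ (k : ℕ)})

set_option maxHeartbeats 800000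

lemma stdEtilde_mono (n : ℕ) {j j' : ℕ} (h : j ≤ j') : stdEtilde n j ≤ stdEtilde n j' :=
  Submodule.span_mono (Set.image_mono (fun _ hk => le_trans (Nat.sub_le_sub_left h n) hk))

lemma single_inj (n : ℕ) : Function.Injective (fun k : Fin n => (Pi.single k 1 : Fin n → ℂ)) := by
  intro a b hab
  by_contra hne
  have := congrFun hab a
  simp [Pi.single_apply, hne] at this

lemma stdEtilde_finrank (n j : ℕ) (hj : 1 ≤ j) (h : j ≤ n) :
    Module.finrank ℂ (stdEtilde n j) = j := by
  classical
  have hn0 : 0 < n := lt_of_lt_of_le hj h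
  set Tf : Finset (Fin n) := Finset.Ici (⟨n - j, by omega⟩ : Fin n) with hTf
  have hset : {k : Fin n | n - j ≤ (k : ℕ)} = (Tf : Set (Fin n)) := by
    ext k; simp [hTf, Fin.le_def]
  have hfun : (fun k : Fin n => (Pi.single k 1 : Fin n → ℂ)) = ⇑(Pi.basisFun ℂ (Fin n)) :=
    funext fun k => (Pi.basisFun_apply ℂ (Fin n) k).symm
  have hb : LinearIndependent ℂ
      (fun x : (Tf : Set (Fin n)) => (fun k : Fin n => (Pi.single k 1 : Fin n → ℂ)) x) := by
    rw [hfun]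
    exact (Pi.basisFun ℂ (Fin n)).linearIndependent.comp _ Subtype.coe_injective
  rw [stdEtilde, hset, Set.image_eq_range, finrank_span_eq_card hb]
  rw [show Fintype.card ((Tf : Set (Fin n))) = Tf.card from by simp]
  rw [hTf, Fin.card_Ici]
  simp only [Fin.val_mk]
  omega

theorem stmt15 (p q n : ℕ) (hp : 0 < p) (hq : 0 < q) (hn : n = p + q)
    (v : Equiv.Perm (Fin n)) (hv : AscShuffle p v)
    (F : Fin n → Submodule ℂ (Fin n → ℂ))
    (hchain : ∀ i j : Fin n, i ≤ j → F i ≤ F j)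
    (hdim : ∀ i : Fin n, Module.finrank ℂ (F i) = (i : ℕ) + 1)
    (hyp : ∀ i : Fin n, Module.finrank ℂ ↥(F i ⊓ stdEtilde n q) =
      (Finset.univ.filter
        (fun k : Fin n => (k : ℕ) + 1 ≤ (i : ℕ) + 1 ∧ p < (v k : ℕ) + 1)).card) :
    ∀ i : Fin n, ∀ j : ℕ, 1 ≤ j → j ≤ n →
      (Finset.univ.filter
          (fun k : Fin n => (k : ℕ) + 1 ≤ (i : ℕ) + 1 ∧ n - j < (v k : ℕ) + 1)).card ≤
        Module.finrank ℂ ↥(F i ⊓ stdEtilde n j) := by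
  classical
  intro i j hj1 hjn
  have hn0 : 0 < n := by omega
  have hamb : Module.finrank ℂ (Fin n → ℂ) = n := by
    simp [Module.finrank_fintype_fun_eq_card]
  -- order facts from the shuffle property
  have O1 : ∀ k₀ u : Fin n, p < (v k₀ : ℕ) + 1 → p < (u : ℕ) + 1 → (u : ℕ) ≤ (v k₀ : ℕ) →
      ((v.symm u : Fin n) : ℕ) ≤ (k₀ : ℕ) := by
    intro k₀ u h1 h2 h3
    by_contra hlt
    push_neg at hlt
    have hk : k₀ < v.symm u := Fin.lt_def.mpr hlt
    have h4 := (hv k₀ (v.symm u) hk).2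
    rw [Equiv.apply_symm_apply] at h4
    have h5 := h4 ⟨h1, h2⟩
    rw [Fin.lt_def] at h5
    omega
  have O2 : ∀ k₀ u : Fin n, (v k₀ : ℕ) + 1 ≤ p → (u : ℕ) + 1 ≤ p → (u : ℕ) ≤ (v k₀ : ℕ) →
      ((v.symm u : Fin n) : ℕ) ≤ (k₀ : ℕ) := by
    intro k₀ u h1 h2 h3
    by_contra hlt
    push_neg at hlt
    have hk : k₀ < v.symm u := Fin.lt_def.mpr hlt
    have h4 := (hv k₀ (v.symm u) hk).1
    rw [Equiv.apply_symm_apply] at h4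
    have h5 := h4 ⟨h1, h2⟩
    rw [Fin.lt_def] at h5
    omega
  set S : Finset (Fin n) := Finset.univ.filter
      (fun k : Fin n => (k : ℕ) + 1 ≤ (i : ℕ) + 1 ∧ n - j < (v k : ℕ) + 1) with hSdef
  set A : Finset (Fin n) := Finset.univ.filter
      (fun k : Fin n => (k : ℕ) + 1 ≤ (i : ℕ) + 1 ∧ p < (v k : ℕ) + 1) with hAdef
  have hEj : Module.finrank ℂ (stdEtilde n j) = j := stdEtilde_finrank n j hj1 hjn
  have hEq : Module.finrank ℂ (stdEtilde n q) = q := stdEtilde_finrank n q hq (by omega)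
  rcases le_total j q with hjq | hqj
  · -- case j ≤ q
    by_cases hS : S.Nonempty
    · obtain ⟨k₀, hk₀S, hk₀max⟩ := Finset.exists_max_image S (fun k => (v k : ℕ)) hS
      rw [hSdef, Finset.mem_filter] at hk₀S
      obtain ⟨-, hk₀i, hk₀v⟩ := hk₀S
      have b1 : S.card ≤ (v k₀ : ℕ) + 1 - (n - j) := by
        have hcard : S.card ≤ (Finset.Icc (n - j) ((v k₀ : ℕ))).card := by
          apply Finset.card_le_card_of_injOn (fun k => (v k : ℕ))
          · intro k hk
            have hk' := hk
            rw [hSdef, Finset.mem_coe, Finset.mem_filter] at hk'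
            simp only [Finset.mem_coe, Finset.mem_Icc]
            exact ⟨by omega, hk₀max k hk⟩
          · intro x hx y hy hxy
            exact v.injective (Fin.val_injective hxy)
        rwa [Nat.card_Icc] at hcard
      have hvk₀p : p < (v k₀ : ℕ) + 1 := by omega
      have b2 : (v k₀ : ℕ) + 1 - p ≤ A.card := by
        have hcard : (Finset.Icc p ((v k₀ : ℕ))).card ≤ A.card := by
          apply Finset.card_le_card_of_injOn
            (fun u => v.symm (if h : u < n then (⟨u, h⟩ : Fin n) else k₀))
          · intro u hu
            simp only [Finset.mem_coe, Finset.mem_Icc] at hu ⊢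
            have hun : u < n := lt_of_le_of_lt hu.2 (v k₀).isLt
            rw [dif_pos hun]
            have hle := O1 k₀ ⟨u, hun⟩ hvk₀p (by simp; omega) (by simp; omega)
            rw [hAdef, Finset.mem_filter]
            refine ⟨Finset.mem_univ _, by omega, ?_⟩
            rw [Equiv.apply_symm_apply]
            simp only [Fin.val_mk]
            omega
          · intro x hx y hy hxy
            simp only [Finset.mem_coe, Finset.mem_Icc] at hx hy
            have hxn : x < n := lt_of_le_of_lt hx.2 (v k₀).isLt
            have hyn : y < n := lt_of_le_of_lt hy.2 (v k₀).isLt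
            simp only [dif_pos hxn, dif_pos hyn] at hxy
            simpa using congrArg Fin.val (v.symm.injective hxy)
        rwa [Nat.card_Icc] at hcard
      have key := Submodule.finrank_sup_add_finrank_inf_eq (F i ⊓ stdEtilde n q) (stdEtilde n j)
      have hinf : (F i ⊓ stdEtilde n q) ⊓ stdEtilde n j = F i ⊓ stdEtilde n j := by
        rw [inf_assoc, inf_eq_right.mpr (stdEtilde_mono n hjq)]
      have h2 : Module.finrank ℂ ↥((F i ⊓ stdEtilde n q) ⊔ stdEtilde n j) ≤ q :=
        le_trans (Submodule.finrank_mono (sup_le inf_le_right (stdEtilde_mono n hjq)))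
          (le_of_eq hEq)
      have hA : Module.finrank ℂ ↥(F i ⊓ stdEtilde n q) = A.card := hyp i
      rw [hinf, hEj, hA] at key
      have hvlt := (v k₀).isLt
      omega
    · rw [Finset.not_nonempty_iff_eq_empty] at hS
      rw [hS]
      exact Nat.zero_le _
  · -- case q ≤ j
    by_cases hW : ∃ k₀ : Fin n, (k₀ : ℕ) ≤ (i : ℕ) ∧ n - j ≤ (v k₀ : ℕ) ∧ (v k₀ : ℕ) + 1 ≤ p
    · obtain ⟨k₀, hk1, hk2, hk3⟩ := hW
      set T : Finset (Fin n) := Finset.univ.filter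
          (fun k : Fin n => (k : ℕ) + 1 ≤ (i : ℕ) + 1 ∧ ¬ (n - j < (v k : ℕ) + 1)) with hTdef
      have bT : n - j ≤ T.card := by
        have hcard : (Finset.range (n - j)).card ≤ T.card := by
          apply Finset.card_le_card_of_injOn
            (fun u => v.symm (if h : u < n then (⟨u, h⟩ : Fin n) else k₀))
          · intro u hu
            simp only [Finset.mem_coe, Finset.mem_range] at hu ⊢
            have hun : u < n := by omega
            rw [dif_pos hun]
            have hle := O2 k₀ ⟨u, hun⟩ hk3 (by simp; omega) (by simp; omega)
            rw [hTdef, Finset.mem_filter]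
            refine ⟨Finset.mem_univ _, by omega, ?_⟩
            rw [Equiv.apply_symm_apply]
            simp only [Fin.val_mk]
            omega
          · intro x hx y hy hxy
            simp only [Finset.mem_coe, Finset.mem_range] at hx hy
            have hxn : x < n := by omega
            have hyn : y < n := by omega
            simp only [dif_pos hxn, dif_pos hyn] at hxy
            simpa using congrArg Fin.val (v.symm.injective hxy)
        rwa [Finset.card_range] at hcard
      have hpart : S.card + T.card = (i : ℕ) + 1 := by
        have hIic : (Finset.Iic i).card = (i : ℕ) + 1 := Fin.card_Iic i
        have hS' : S = (Finset.Iic i).filter (fun k => n - j < (v k : ℕ) + 1) := by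
          ext k
          rw [hSdef, Finset.mem_filter, Finset.mem_filter, Finset.mem_Iic, Fin.le_def]
          constructor
          · rintro ⟨-, h1, h2⟩; exact ⟨by omega, h2⟩
          · rintro ⟨h1, h2⟩; exact ⟨Finset.mem_univ _, by omega, h2⟩
        have hT' : T = (Finset.Iic i).filter (fun k => ¬ (n - j < (v k : ℕ) + 1)) := by
          ext k
          rw [hTdef, Finset.mem_filter, Finset.mem_filter, Finset.mem_Iic, Fin.le_def]
          constructor
          · rintro ⟨-, h1, h2⟩; exact ⟨by omega, h2⟩
          · rintro ⟨h1, h2⟩; exact ⟨Finset.mem_univ _, by omega, h2⟩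
        rw [hS', hT', Finset.card_filter_add_card_filter_not, hIic]
      have key := Submodule.finrank_sup_add_finrank_inf_eq (F i) (stdEtilde n j)
      have h2 : Module.finrank ℂ ↥(F i ⊔ stdEtilde n j) ≤ n :=
        le_trans (Submodule.finrank_le _) (le_of_eq hamb)
      rw [hdim i, hEj] at key
      omega
    · push_neg at hW
      have hSA : S ⊆ A := by
        intro k hk
        rw [hSdef, Finset.mem_filter] at hk
        rw [hAdef, Finset.mem_filter]
        refine ⟨Finset.mem_univ _, hk.2.1, ?_⟩
        by_contra hc
        push_neg at hc
        exact absurd (by omega : (v k : ℕ) + 1 ≤ p) (by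
          intro h
          have := hW k (by omega) (by omega)
          omega)
      calc S.card ≤ A.card := Finset.card_le_card hSA
        _ = Module.finrank ℂ ↥(F i ⊓ stdEtilde n q) := (hyp i).symm
        _ ≤ Module.finrank ℂ ↥(F i ⊓ stdEtilde n j) :=
          Submodule.finrank_mono (inf_le_inf_left _ (stdEtilde_mono n hqj))
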